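/- Let (𝒜, ℱ) be a subshift of finite type on ℤ^d. If player A has a winning strategy in the Domino game Γ(𝒜, ℱ, ℤ^d), then the game value is finite: there exists T ∈ ℕ such that A has a strategy guaranteeing a win within T moves. Moreover there exists n ∈ ℕ such that A has a winning strategy that only ever plays cells inside the box ⟦−n, n⟧^d. -/

import Mathlib

open Filter Topology

attribute [local instance] Classical.propDecidable

/-- The two players. -/
inductive Player | A | B
deriving DecidableEq

/-- A cell of the grid `ℤ^d`. -/
abbrev Cell (d : ℕ) := Fin d → ℤ

/-- A (possibly partial) colouring of the grid: `none` means uncoloured.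
Colours are natural numbers; the alphabet of size `m` is `{0, …, m-1}`. -/
abbrev Board (d : ℕ) := Cell d → Option ℕ

/-- A finite pattern, encoded as a list of tiles (cell, colour). -/
abbrev PatternCode (d : ℕ) := List (Cell d × ℕ)

/-- A move: `none` is a pass, `some (i, a)` colours cell `i` with colour `a`. -/
abbrev MoveD (d : ℕ) := Option (Cell d × ℕ)

/-- Code for an SFT: alphabet size together with the list of forbidden patterns. -/
abbrev SFTCode (d : ℕ) := ℕ × List (PatternCode d)

/-- A (positional) strategy: a move for every position. -/
abbrev Strategy (d : ℕ) := Board d → MoveD d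

def emptyBoard (d : ℕ) : Board d := fun _ => none

/-- The pattern `p` occurs in the board `x` translated by `t`. -/
def occursAt {d : ℕ} (p : PatternCode d) (x : Board d) (t : Cell d) : Prop :=
  ∀ q ∈ p, x (t + q.1) = some q.2

/-- A position is final when a translate of some forbidden pattern occurs. -/
def isFinal {d : ℕ} (F : List (PatternCode d)) (x : Board d) : Prop :=
  ∃ p ∈ F, ∃ t : Cell d, occursAt p x t

/-- Legality of a move in the game with alphabet `{0,…,m-1}` played on `E`:
a pass is always legal, and a colouring move must pick an uncoloured cell of `E`
and a colour of the alphabet. -/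
def legalMove {d : ℕ} (m : ℕ) (E : Set (Cell d)) (x : Board d) : MoveD d → Prop
  | none => True
  | some (i, a) => i ∈ E ∧ x i = none ∧ a < m

def applyMove {d : ℕ} (x : Board d) : MoveD d → Board d
  | none => x
  | some (i, a) => Function.update x i (some a)

/-- One step of the game: the move proposed by the strategy is played if legal
(an illegal move is treated as a pass). -/
noncomputable def step {d : ℕ} (m : ℕ) (E : Set (Cell d)) (st : Strategy d)
    (x : Board d) : Board d :=
  if legalMove m E x (st x) then applyMove x (st x) else x

/-- The play generated by strategies `stA`, `stB` with turn order `s`,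
starting from the empty board. -/
noncomputable def play {d : ℕ} (m : ℕ) (E : Set (Cell d)) (s : ℕ → Player)
    (stA stB : Strategy d) : ℕ → Board d
  | 0 => emptyBoard d
  | t + 1 => step m E (match s t with | .A => stA | .B => stB) (play m E s stA stB t)

/-- The alternating turn order: `A` plays first. -/
def alt : ℕ → Player := fun t => if t % 2 = 0 then .A else .B

/-- Player `A` has a winning strategy in the Domino game with turn order `s`:
a final position is eventually reached whatever `B` plays. -/
def AWins {d : ℕ} (m : ℕ) (F : List (PatternCode d)) (E : Set (Cell d))
    (s : ℕ → Player) : Prop :=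
  ∃ stA : Strategy d, ∀ stB : Strategy d, ∃ t : ℕ, isFinal F (play m E s stA stB t)

/-- Player `B` has a winning strategy in the Domino game with turn order `s`:
a final position is never reached whatever `A` plays. -/
def BWins {d : ℕ} (m : ℕ) (F : List (PatternCode d)) (E : Set (Cell d))
    (s : ℕ → Player) : Prop :=
  ∃ stB : Strategy d, ∀ stA : Strategy d, ∀ t : ℕ, ¬ isFinal F (play m E s stA stB t)

/-- The Domino game problem on `ℤ^d` (alternating turn order, `A` first). -/
def DGame (d : ℕ) : SFTCode d → Prop :=
  fun c => AWins c.1 c.2 Set.univ alt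

/-- The finite box `⟦-n, n⟧^d` of cells of `ℤ^d`. -/
def box (d n : ℕ) : Set (Cell d) := {i | ∀ k, |i k| ≤ (n : ℤ)}

/- ===================== Auxiliary development ===================== -/

namespace DominoAux

open Function

variable {d : ℕ}

/-- sup-norm of a vector of `ℤ^d`, as a natural number. -/
def cnorm (u : Cell d) : ℕ := Finset.univ.sup fun k => (u k).natAbs

/-- sup-distance on `ℤ^d`. -/
def cdist (u v : Cell d) : ℕ := cnorm (u - v)

lemma coord_le_cnorm (u : Cell d) (k : Fin d) : (u k).natAbs ≤ cnorm u :=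
  Finset.le_sup (f := fun k => (u k).natAbs) (Finset.mem_univ k)

lemma cnorm_le_iff {u : Cell d} {n : ℕ} : cnorm u ≤ n ↔ ∀ k, (u k).natAbs ≤ n := by
  constructor
  · intro h k; exact le_trans (coord_le_cnorm u k) h
  · intro h; exact Finset.sup_le fun k _ => h k

lemma cnorm_zero : cnorm (0 : Cell d) = 0 := by
  refine Nat.le_zero.mp ?_
  exact Finset.sup_le fun k _ => by simp

lemma cdist_self (u : Cell d) : cdist u u = 0 := by
  simp [cdist, sub_self, cnorm_zero]

lemma cdist_comm (u v : Cell d) : cdist u v = cdist v u := by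
  unfold cdist cnorm
  congr 1; funext k
  simp only [Pi.sub_apply]
  omega

lemma cdist_triangle (a b c : Cell d) : cdist a c ≤ cdist a b + cdist b c := by
  have key : ∀ k : Fin d, ((a - c) k).natAbs ≤ cdist a b + cdist b c := by
    intro k
    have h1 : (a - c) k = (a - b) k + (b - c) k := by
      simp only [Pi.sub_apply]; ring
    calc ((a - c) k).natAbs = ((a - b) k + (b - c) k).natAbs := by rw [h1]
      _ ≤ ((a - b) k).natAbs + ((b - c) k).natAbs := Int.natAbs_add_le _ _
      _ ≤ cdist a b + cdist b c := add_le_add (coord_le_cnorm _ k) (coord_le_cnorm _ k)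
  show cnorm (a - c) ≤ _
  unfold cnorm
  exact Finset.sup_le fun k _ => key k

lemma cdist_eq_zero {u v : Cell d} (h : cdist u v = 0) : u = v := by
  funext k
  have := coord_le_cnorm (u - v) k
  rw [show cnorm (u - v) = cdist u v from rfl, h] at this
  have : (u k - v k).natAbs = 0 := by simpa [Pi.sub_apply] using this
  omega

lemma cdist_add_right (t u v : Cell d) : cdist (t + u) (t + v) = cdist u v := by
  unfold cdist; congr 1; abel

lemma cdist_of_add_sub (a u v : Cell d) : cdist (a + (u - v)) a = cdist u v := by
  unfold cdist; congr 1; abel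

/-- maximum of a list of naturals -/
def listMax (l : List ℕ) : ℕ := l.foldr max 0

lemma le_listMax {l : List ℕ} {a : ℕ} (h : a ∈ l) : a ≤ listMax l := by
  induction l with
  | nil => cases h
  | cons b l ih =>
    rcases List.mem_cons.mp h with rfl | h
    · exact le_max_left _ _
    · exact le_trans (ih h) (le_max_right _ _)

/-- radius of the family of forbidden patterns -/
def patRad (F : List (PatternCode d)) : ℕ :=
  listMax (F.map fun p => listMax (p.map fun q => cnorm q.1))

lemma patRad_le {F : List (PatternCode d)} {p : PatternCode d} {q : Cell d × ℕ}
    (hp : p ∈ F) (hq : q ∈ p) : cnorm q.1 ≤ patRad F := by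
  refine le_trans ?_ (le_listMax (List.mem_map_of_mem hp))
  exact le_listMax (List.mem_map_of_mem hq)

/-- the scale function -/
def rho (R : ℕ) (j : ℕ) : ℕ := (2 * R + 1) * 16 ^ (j + 1)

lemma rho_succ (R j : ℕ) : rho R (j + 1) = 16 * rho R j := by
  unfold rho; ring

lemma rho_pos (R j : ℕ) : 0 < rho R j := by
  unfold rho; positivity

lemma two_R_le_rho (R j : ℕ) : 2 * R ≤ rho R j := by
  have : 1 ≤ 16 ^ (j+1) := Nat.one_le_pow _ _ (by norm_num)
  calc 2 * R ≤ (2 * R + 1) * 1 := by omega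
    _ ≤ (2 * R + 1) * 16 ^ (j+1) := Nat.mul_le_mul_left _ this

lemma rho_mono (R : ℕ) {j j' : ℕ} (h : j ≤ j') : rho R j ≤ rho R j' := by
  unfold rho
  exact Nat.mul_le_mul_left _ (Nat.pow_le_pow_right (by norm_num) (by omega))

/- ------------------- basic game lemmas ------------------- -/

lemma legal_univ {m : ℕ} {E : Set (Cell d)} {x : Board d} {b : MoveD d}
    (h : legalMove m E x b) : legalMove m Set.univ x b := by
  cases b with
  | none => trivial
  | some p => exact ⟨Set.mem_univ _, h.2.1, h.2.2⟩

lemma legal_none {m : ℕ} {E : Set (Cell d)} {x : Board d} : legalMove m E x none := trivial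

lemma applyMove_extends {x : Board d} {b : MoveD d} {m : ℕ} {E : Set (Cell d)}
    (hb : legalMove m E x b) : ∀ i a, x i = some a → (applyMove x b) i = some a := by
  intro i a hi
  cases b with
  | none => exact hi
  | some p =>
    obtain ⟨i0, c⟩ := p
    by_cases h : i = i0
    · subst h; rw [hb.2.1] at hi; cases hi
    · simpa [applyMove, Function.update_of_ne h] using hi

lemma isFinal_mono {F : List (PatternCode d)} {x y : Board d}
    (hxy : ∀ i a, x i = some a → y i = some a) (h : isFinal F x) : isFinal F y := by
  obtain ⟨p, hp, t, ho⟩ := h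
  exact ⟨p, hp, t, fun q hq => hxy _ _ (ho q hq)⟩

lemma step_exists (m : ℕ) (E : Set (Cell d)) (st : Strategy d) (x : Board d) :
    ∃ b, legalMove m E x b ∧ step m E st x = applyMove x b := by
  by_cases h : legalMove m E x (st x)
  · exact ⟨st x, h, if_pos h⟩
  · exact ⟨none, trivial, by rw [step, if_neg h]; rfl⟩

lemma step_of {m : ℕ} {E : Set (Cell d)} {st : Strategy d} {x : Board d}
    (h : legalMove m E x (st x)) : step m E st x = applyMove x (st x) := if_pos h

lemma alt_even (j : ℕ) : alt (2 * j) = Player.A := by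
  simp [alt, Nat.mul_mod_right]

lemma alt_odd (j : ℕ) : alt (2 * j + 1) = Player.B := by
  have : (2 * j + 1) % 2 = 1 := by omega
  simp [alt, this]

lemma play_even_succ (m : ℕ) (E : Set (Cell d)) (stA stB : Strategy d) (j : ℕ) :
    play m E alt stA stB (2 * j + 1) = step m E stA (play m E alt stA stB (2 * j)) := by
  rw [play, alt_even]

lemma play_odd_succ (m : ℕ) (E : Set (Cell d)) (stA stB : Strategy d) (j : ℕ) :
    play m E alt stA stB (2 * j + 2) = step m E stB (play m E alt stA stB (2 * j + 1)) := by
  rw [play, alt_odd]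

/-- support of updated board -/
lemma supp_update {z : Board d} {u : Cell d} {c : ℕ} (w : Cell d) :
    (Function.update z u (some c)) w ≠ none ↔ (w = u ∨ z w ≠ none) := by
  by_cases h : w = u
  · subst h; simp
  · simp [Function.update_of_ne h, h]

/-- every position in a play has finite support -/
lemma play_supp (m : ℕ) (E : Set (Cell d)) (s : ℕ → Player) (stA stB : Strategy d) :
    ∀ t, ∃ J : Finset (Cell d), ∀ w, play m E s stA stB t w ≠ none ↔ w ∈ J := by
  intro t
  induction t with
  | zero => exact ⟨∅, by simp [play, emptyBoard]⟩
  | succ t ih =>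
    obtain ⟨J, hJ⟩ := ih
    obtain ⟨b, _, hb⟩ := step_exists m E (match s t with | .A => stA | .B => stB)
      (play m E s stA stB t)
    rw [play, hb]
    cases b with
    | none => exact ⟨J, hJ⟩
    | some p =>
      exact ⟨insert p.1 J, fun w => by
        rw [show applyMove _ (some p) = Function.update _ p.1 (some p.2) from rfl,
          supp_update, Finset.mem_insert, hJ]⟩

end DominoAux
namespace DominoAux

variable {d : ℕ}

/-- The piecewise-translation simulation relation between boards, at scale `σ`. -/
structure Sim (σ : ℕ) (z z' : Board d) (φ : Cell d → Cell d) : Prop where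
  colour : ∀ u, z u ≠ none → z' (φ u) = z u
  rig : ∀ u v, z u ≠ none → z v ≠ none → cdist u v ≤ σ → φ u - φ v = u - v
  corig : ∀ u v, z u ≠ none → z v ≠ none → cdist (φ u) (φ v) ≤ σ → φ u - φ v = u - v
  junk : ∀ w, z' w ≠ none →
    (∃ u, z u ≠ none ∧ φ u = w) ∨ (∀ u, z u ≠ none → σ < cdist w (φ u))

lemma sub_eq_shift {a b c e : Cell d} (h : a - b = c - e) : a = b + (c - e) := by
  rw [← h]; abel

lemma Sim.mono {σ σ' : ℕ} (hle : σ' ≤ σ) {z z' : Board d} {φ : Cell d → Cell d}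
    (hs : Sim σ z z' φ) : Sim σ' z z' φ where
  colour := hs.colour
  rig := fun u v hu hv hd => hs.rig u v hu hv (le_trans hd hle)
  corig := fun u v hu hv hd => hs.corig u v hu hv (le_trans hd hle)
  junk := fun w hw => (hs.junk w hw).imp id fun h u hu => lt_of_le_of_lt hle (h u hu)

/-- finality transfers along a simulation whose scale dominates twice the pattern radius. -/
lemma final_transfer {σ : ℕ} {F : List (PatternCode d)} {z z' : Board d}
    {φ : Cell d → Cell d} (hR : 2 * patRad F ≤ σ) (hs : Sim σ z z' φ)
    (h : isFinal F z) : isFinal F z' := by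
  obtain ⟨p, hp, t, ho⟩ := h
  cases p with
  | nil => exact ⟨[], hp, t, by intro q hq; cases hq⟩
  | cons q0 p' =>
    have hq0mem : q0 ∈ q0 :: p' := List.mem_cons_self
    refine ⟨q0 :: p', hp, φ (t + q0.1) - q0.1, ?_⟩
    intro q hq
    have hcol : z (t + q.1) = some q.2 := ho q hq
    have hcol0 : z (t + q0.1) = some q0.2 := ho q0 hq0mem
    have hne : z (t + q.1) ≠ none := by rw [hcol]; simp
    have hne0 : z (t + q0.1) ≠ none := by rw [hcol0]; simp
    have hdist : cdist (t + q.1) (t + q0.1) ≤ σ := by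
      rw [cdist_add_right]
      have t1 := cdist_triangle q.1 0 q0.1
      have h1 : cdist q.1 0 ≤ patRad F := by
        simpa [cdist] using patRad_le hp hq
      have h2 : cdist (0 : Cell d) q0.1 ≤ patRad F := by
        rw [cdist_comm]
        simpa [cdist] using patRad_le hp hq0mem
      omega
    have hφ : φ (t + q.1) = φ (t + q0.1) + ((t + q.1) - (t + q0.1)) :=
      sub_eq_shift (hs.rig _ _ hne hne0 hdist)
    have hcell : φ (t + q0.1) - q0.1 + q.1 = φ (t + q.1) := by
      rw [hφ]; abel
    rw [hcell, hs.colour _ hne, hcol]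

lemma Sim.image_coloured {σ : ℕ} {z z' : Board d} {φ : Cell d → Cell d}
    (hs : Sim σ z z' φ) {u : Cell d} (hu : z u ≠ none) : z' (φ u) ≠ none := by
  rw [hs.colour u hu]; exact hu

/-- Extension of a simulation by a move near an existing coloured cell. -/
lemma extendNear {σ σ' : ℕ} (hσ' : 4 * σ' ≤ σ) {z z' : Board d} {φ : Cell d → Cell d}
    (hs : Sim σ z z' φ) {u v : Cell d} (hv : z v ≠ none) (hu : z u = none)
    (hd4 : 4 * cdist u v ≤ σ) (c : ℕ) :
    z' (φ v + (u - v)) = none ∧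
      Sim σ' (Function.update z u (some c))
        (Function.update z' (φ v + (u - v)) (some c))
        (Function.update φ u (φ v + (u - v))) := by
  have hdw0 : cdist (φ v + (u - v)) (φ v) = cdist u v := cdist_of_add_sub _ _ _
  -- the target cell is uncoloured
  have hfree : z' (φ v + (u - v)) = none := by
    by_contra h
    rcases hs.junk _ h with ⟨p, hp, hφp⟩ | hfar
    · have hcd : cdist (φ p) (φ v) ≤ σ := by rw [hφp, hdw0]; omega
      have hco := hs.corig p v hp hv hcd
      have h2 : φ p - φ v = u - v := by rw [hφp]; abel
      have h3 : p - v = u - v := by rw [← hco, h2]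
      have hpv : p = u := by
        have h4 := congrArg (fun w => w + v) h3
        simpa [sub_add_cancel] using h4
      rw [hpv] at hp; exact hp hu
    · have := hfar v hv
      rw [hdw0] at this; omega
  refine ⟨hfree, ?_⟩
  have hσ'σ : σ' ≤ σ := by omega
  constructor
  · -- colour
    intro p hp
    by_cases hpu : p = u
    · subst hpu
      rw [Function.update_self, Function.update_self, Function.update_self]
    · have hzp : z p ≠ none := by rw [Function.update_of_ne hpu] at hp; exact hp
      have hφp : φ p ≠ φ v + (u - v) := by
        intro h; rw [← h] at hfree; exact hs.image_coloured hzp hfree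
      rw [Function.update_of_ne hpu, Function.update_of_ne hpu,
        Function.update_of_ne hφp, hs.colour p hzp]
  · -- rig
    intro p q hp hq hdpq
    by_cases hpu : p = u <;> by_cases hqu : q = u
    · rcases hpu.symm with rfl; rcases hqu.symm with rfl; simp
    · rcases hpu.symm with rfl
      have hzq : z q ≠ none := by rw [Function.update_of_ne hqu] at hq; exact hq
      rw [Function.update_self, Function.update_of_ne hqu]
      have hvq : cdist v q ≤ σ := by
        have t1 := cdist_triangle v u q
        have t2 : cdist v u = cdist u v := cdist_comm _ _
        omega
      have hr := hs.rig v q hv hzq hvq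
      have hsplit : φ v + (u - v) - φ q = (φ v - φ q) + (u - v) := by abel
      rw [hsplit, hr]; abel
    · rcases hqu.symm with rfl
      have hzp : z p ≠ none := by rw [Function.update_of_ne hpu] at hp; exact hp
      rw [Function.update_self, Function.update_of_ne hpu]
      have hpv : cdist p v ≤ σ := by
        have t1 := cdist_triangle p u v
        omega
      have hr := hs.rig p v hzp hv hpv
      have hsplit : φ p - (φ v + (u - v)) = (φ p - φ v) - (u - v) := by abel
      rw [hsplit, hr]; abel
    · have hzp : z p ≠ none := by rw [Function.update_of_ne hpu] at hp; exact hp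
      have hzq : z q ≠ none := by rw [Function.update_of_ne hqu] at hq; exact hq
      rw [Function.update_of_ne hpu, Function.update_of_ne hqu]
      exact hs.rig p q hzp hzq (le_trans hdpq hσ'σ)
  · -- corig
    intro p q hp hq hdpq
    by_cases hpu : p = u <;> by_cases hqu : q = u
    · rcases hpu.symm with rfl; rcases hqu.symm with rfl; simp
    · rcases hpu.symm with rfl
      have hzq : z q ≠ none := by rw [Function.update_of_ne hqu] at hq; exact hq
      rw [Function.update_self, Function.update_of_ne hqu] at hdpq
      rw [Function.update_self, Function.update_of_ne hqu]
      have hvq : cdist (φ v) (φ q) ≤ σ := by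
        have t1 := cdist_triangle (φ v) (φ v + (u - v)) (φ q)
        have t2 : cdist (φ v) (φ v + (u - v)) = cdist u v := by
          rw [cdist_comm]; exact hdw0
        omega
      have hr := hs.corig v q hv hzq hvq
      have hsplit : φ v + (u - v) - φ q = (φ v - φ q) + (u - v) := by abel
      rw [hsplit, hr]; abel
    · rcases hqu.symm with rfl
      have hzp : z p ≠ none := by rw [Function.update_of_ne hpu] at hp; exact hp
      rw [Function.update_of_ne hpu, Function.update_self] at hdpq
      rw [Function.update_self, Function.update_of_ne hpu]
      have hpv : cdist (φ p) (φ v) ≤ σ := by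
        have t1 := cdist_triangle (φ p) (φ v + (u - v)) (φ v)
        omega
      have hr := hs.corig p v hzp hv hpv
      have hsplit : φ p - (φ v + (u - v)) = (φ p - φ v) - (u - v) := by abel
      rw [hsplit, hr]; abel
    · have hzp : z p ≠ none := by rw [Function.update_of_ne hpu] at hp; exact hp
      have hzq : z q ≠ none := by rw [Function.update_of_ne hqu] at hq; exact hq
      rw [Function.update_of_ne hpu, Function.update_of_ne hqu] at hdpq
      rw [Function.update_of_ne hpu, Function.update_of_ne hqu]
      exact hs.corig p q hzp hzq (le_trans hdpq hσ'σ)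
  · -- junk
    intro w hw
    by_cases hww0 : w = φ v + (u - v)
    · rcases hww0.symm with rfl
      exact Or.inl ⟨u, by simp, by rw [Function.update_self]⟩
    · have hzw : z' w ≠ none := by rw [Function.update_of_ne hww0] at hw; exact hw
      rcases hs.junk w hzw with ⟨p, hp, hφp⟩ | hfar
      · have hpu : p ≠ u := fun h => hp (h ▸ hu)
        exact Or.inl ⟨p, by rw [Function.update_of_ne hpu]; exact hp,
          by rw [Function.update_of_ne hpu]; exact hφp⟩
      · refine Or.inr fun p hp => ?_
        by_cases hpu : p = u
        · rcases hpu.symm with rfl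
          rw [Function.update_self]
          have t1 := cdist_triangle w (φ v + (u - v)) (φ v)
          have t2 := hfar v hv
          rw [hdw0] at t1
          omega
        · rw [Function.update_of_ne hpu]
          have hzp : z p ≠ none := by rw [Function.update_of_ne hpu] at hp; exact hp
          exact lt_of_le_of_lt hσ'σ (hfar p hzp)

/-- Extension of a simulation by a fresh (isolated) move. -/
lemma extendFresh {σ σ' : ℕ} (hσ' : σ' ≤ σ) {z z' : Board d} {φ : Cell d → Cell d}
    (hs : Sim σ z z' φ) {u : Cell d} (hu : z u = none)
    (hfz : ∀ p, z p ≠ none → σ' < cdist u p) {i' : Cell d}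
    (hfz' : ∀ w, z' w ≠ none → σ < cdist i' w) (c : ℕ) :
    z' i' = none ∧
      Sim σ' (Function.update z u (some c)) (Function.update z' i' (some c))
        (Function.update φ u i') := by
  have hfree : z' i' = none := by
    by_contra h
    have := hfz' i' h
    rw [cdist_self] at this; omega
  refine ⟨hfree, ?_⟩
  constructor
  · intro p hp
    by_cases hpu : p = u
    · subst hpu; rw [Function.update_self, Function.update_self, Function.update_self]
    · have hzp : z p ≠ none := by rw [Function.update_of_ne hpu] at hp; exact hp
      have hφp : φ p ≠ i' := by
        intro h; rw [← h] at hfree; exact hs.image_coloured hzp hfree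
      rw [Function.update_of_ne hpu, Function.update_of_ne hpu,
        Function.update_of_ne hφp, hs.colour p hzp]
  · intro p q hp hq hdpq
    by_cases hpu : p = u <;> by_cases hqu : q = u
    · rcases hpu.symm with rfl; rcases hqu.symm with rfl; simp
    · rcases hpu.symm with rfl
      have hzq : z q ≠ none := by rw [Function.update_of_ne hqu] at hq; exact hq
      have := hfz q hzq
      exact absurd hdpq (by omega)
    · rcases hqu.symm with rfl
      have hzp : z p ≠ none := by rw [Function.update_of_ne hpu] at hp; exact hp
      have := hfz p hzp
      rw [cdist_comm] at hdpq
      exact absurd hdpq (by omega)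
    · have hzp : z p ≠ none := by rw [Function.update_of_ne hpu] at hp; exact hp
      have hzq : z q ≠ none := by rw [Function.update_of_ne hqu] at hq; exact hq
      rw [Function.update_of_ne hpu, Function.update_of_ne hqu]
      exact hs.rig p q hzp hzq (le_trans hdpq hσ')
  · intro p q hp hq hdpq
    by_cases hpu : p = u <;> by_cases hqu : q = u
    · rcases hpu.symm with rfl; rcases hqu.symm with rfl; simp
    · rcases hpu.symm with rfl
      have hzq : z q ≠ none := by rw [Function.update_of_ne hqu] at hq; exact hq
      rw [Function.update_self, Function.update_of_ne hqu] at hdpq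
      have h2 := hfz' (φ q) (hs.image_coloured hzq)
      exact absurd hdpq (by omega)
    · rcases hqu.symm with rfl
      have hzp : z p ≠ none := by rw [Function.update_of_ne hpu] at hp; exact hp
      rw [Function.update_of_ne hpu, Function.update_self] at hdpq
      have h2 := hfz' (φ p) (hs.image_coloured hzp)
      rw [cdist_comm] at hdpq
      exact absurd hdpq (by omega)
    · have hzp : z p ≠ none := by rw [Function.update_of_ne hpu] at hp; exact hp
      have hzq : z q ≠ none := by rw [Function.update_of_ne hqu] at hq; exact hq
      rw [Function.update_of_ne hpu, Function.update_of_ne hqu] at hdpq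
      rw [Function.update_of_ne hpu, Function.update_of_ne hqu]
      exact hs.corig p q hzp hzq (le_trans hdpq hσ')
  · intro w hw
    by_cases hwi : w = i'
    · rcases hwi.symm with rfl
      exact Or.inl ⟨u, by simp, by rw [Function.update_self]⟩
    · have hzw : z' w ≠ none := by rw [Function.update_of_ne hwi] at hw; exact hw
      rcases hs.junk w hzw with ⟨p, hp, hφp⟩ | hfar
      · have hpu : p ≠ u := fun h => hp (h ▸ hu)
        exact Or.inl ⟨p, by rw [Function.update_of_ne hpu]; exact hp,
          by rw [Function.update_of_ne hpu]; exact hφp⟩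
      · refine Or.inr fun p hp => ?_
        by_cases hpu : p = u
        · rcases hpu.symm with rfl
          rw [Function.update_self]
          have := hfz' w hzw
          rw [cdist_comm] at this
          omega
        · rw [Function.update_of_ne hpu]
          have hzp : z p ≠ none := by rw [Function.update_of_ne hpu] at hp; exact hp
          exact lt_of_le_of_lt hσ' (hfar p hzp)

/-- Extension of a simulation by an isolated junk tile on the target side. -/
lemma extendJunk {σ σ' : ℕ} (hσ' : σ' ≤ σ) {z z' : Board d} {φ : Cell d → Cell d}
    (hs : Sim σ z z' φ) {w' : Cell d} (hw' : z' w' = none)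
    (hfar : ∀ p, z p ≠ none → σ' < cdist w' (φ p)) (c' : ℕ) :
    Sim σ' z (Function.update z' w' (some c')) φ where
  colour := fun p hp => by
    have hφp : φ p ≠ w' := by
      intro h; rw [← h] at hw'; exact hs.image_coloured hp hw'
    rw [Function.update_of_ne hφp, hs.colour p hp]
  rig := fun u v hu hv hd => hs.rig u v hu hv (le_trans hd hσ')
  corig := fun u v hu hv hd => hs.corig u v hu hv (le_trans hd hσ')
  junk := fun w hw => by
    by_cases hww : w = w'
    · rcases hww.symm with rfl; exact Or.inr fun p hp => hfar p hp
    · have hzw : z' w ≠ none := by rw [Function.update_of_ne hww] at hw; exact hw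
      exact (hs.junk w hzw).imp id fun h p hp => lt_of_le_of_lt hσ' (h p hp)

end DominoAux
namespace DominoAux

variable {d : ℕ}

/-- `Wk m F EA k x` : player A (whose moves are restricted to `EA`) can force a
final position within `k` rounds, starting from board `x`, A to move, against an
unrestricted B. -/
def Wk (m : ℕ) (F : List (PatternCode d)) (EA : Set (Cell d)) : ℕ → Board d → Prop
  | 0, x => isFinal F x
  | k+1, x => isFinal F x ∨ ∃ a, legalMove m EA x a ∧
      ∀ b, legalMove m Set.univ (applyMove x a) b →
        Wk m F EA k (applyMove (applyMove x a) b)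

lemma Wk_zero {m : ℕ} {F : List (PatternCode d)} {EA : Set (Cell d)} {x : Board d} :
    Wk m F EA 0 x ↔ isFinal F x := Iff.rfl

lemma Wk_succ {m : ℕ} {F : List (PatternCode d)} {EA : Set (Cell d)} {x : Board d} {k : ℕ} :
    Wk m F EA (k+1) x ↔ isFinal F x ∨ ∃ a, legalMove m EA x a ∧
      ∀ b, legalMove m Set.univ (applyMove x a) b →
        Wk m F EA k (applyMove (applyMove x a) b) := Iff.rfl

lemma wk_of_final {m : ℕ} {F : List (PatternCode d)} {EA : Set (Cell d)} {x : Board d}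
    (h : isFinal F x) : ∀ k, Wk m F EA k x := by
  intro k; cases k with
  | zero => exact h
  | succ k => exact Or.inl h

lemma wk_succ_of_wk {m : ℕ} {F : List (PatternCode d)} {EA : Set (Cell d)} :
    ∀ {k : ℕ} {x : Board d}, Wk m F EA k x → Wk m F EA (k+1) x := by
  intro k
  induction k with
  | zero => intro x h; exact Or.inl h
  | succ k ih =>
    intro x h
    rcases h with h | ⟨a, ha, hb⟩
    · exact Or.inl h
    · exact Or.inr ⟨a, ha, fun b hbl => ih (hb b hbl)⟩

lemma wk_mono {m : ℕ} {F : List (PatternCode d)} {EA : Set (Cell d)} {x : Board d}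
    {k k' : ℕ} (hkk : k ≤ k') (h : Wk m F EA k x) : Wk m F EA k' x := by
  induction k' with
  | zero => rwa [Nat.le_zero.mp hkk] at h
  | succ k' ih =>
    rcases Nat.lt_or_ge k (k'+1) with hlt | hge
    · exact wk_succ_of_wk (ih (by omega))
    · rwa [le_antisymm hkk hge] at h

/-- **Master transfer lemma.**  If `z'` simulates `z` (via a piecewise translation
`φ` with isolated junk), the image stays in the core family `C`, and the target
region has room, then A's forcing power transfers from the unrestricted game on
`z` to the `EA`-restricted game on `z'`. -/
theorem master {m : ℕ} {F : List (PatternCode d)} (K : ℕ) (C : ℕ → Set (Cell d))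
    (EA : Set (Cell d)) (SZ : ℕ)
    (hCE : ∀ j, ∀ x ∈ C j, x ∈ EA)
    (hC : ∀ j, j < K → ∀ u w, u ∈ C (j+1) → cdist w u ≤ 8 * rho (patRad F) j → w ∈ C j)
    (hRoom : ∀ j, j ≤ K → ∀ S : Finset (Cell d), S.card ≤ SZ →
      ∃ i, i ∈ C j ∧ ∀ p ∈ S, 8 * rho (patRad F) j < cdist i p) :
    ∀ k, k ≤ K → ∀ (z z' : Board d) (φ : Cell d → Cell d) (J : Finset (Cell d)),
      Sim (rho (patRad F) k) z z' φ →
      (∀ u, z u ≠ none → φ u ∈ C k) →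
      (∀ w, z' w ≠ none ↔ w ∈ J) →
      J.card + 2 * k ≤ SZ →
      Wk m F Set.univ k z → Wk m F EA k z' := by
  set R := patRad F with hR
  intro k
  induction k with
  | zero =>
    intro _ z z' φ J hsim him hJ hcard hz
    exact final_transfer (le_trans (by omega) (two_R_le_rho R 0)) hsim hz
  | succ k IH =>
    intro hk z z' φ J hsim him hJ hcard hz
    have hkK : k ≤ K := by omega
    have hkK' : k < K := by omega
    have hr16 : rho R (k+1) = 16 * rho R k := rho_succ R k
    by_cases hfz' : isFinal F z'
    · exact Or.inl hfz'
    rcases hz with hfz | ⟨a, haleg, hb⟩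
    · exact Or.inl (final_transfer (le_trans (by omega) (two_R_le_rho R (k+1))) hsim hfz)
    -- A-stage: build the move on the target side
    obtain ⟨a', φ₁, J₁, hlegala', hsim₁, hanch, hJ₁, hcard₁⟩ :
        ∃ (a' : MoveD d) (φ₁ : Cell d → Cell d) (J₁ : Finset (Cell d)),
          legalMove m EA z' a' ∧
          Sim (4 * rho R k) (applyMove z a) (applyMove z' a') φ₁ ∧
          (∀ w, (applyMove z a) w ≠ none →
            ∃ u0, u0 ∈ C (k+1) ∧ cdist (φ₁ w) u0 ≤ 4 * rho R k) ∧
          (∀ w, (applyMove z' a') w ≠ none ↔ w ∈ J₁) ∧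
          J₁.card ≤ J.card + 1 := by
      cases a with
      | none =>
        refine ⟨none, φ, J, trivial, hsim.mono (by omega), ?_, hJ, Nat.le_succ _⟩
        intro w hw
        exact ⟨φ w, him w hw, by rw [cdist_self]; omega⟩
      | some ua =>
        obtain ⟨u, c⟩ := ua
        obtain ⟨-, hu, hc⟩ := haleg
        by_cases hn : ∃ v, z v ≠ none ∧ cdist u v ≤ 4 * rho R k
        · -- near move
          obtain ⟨v, hv, hvd⟩ := hn
          obtain ⟨hfree, hsim₁⟩ := extendNear (σ := rho R (k+1)) (σ' := 4 * rho R k)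
            (by omega) hsim hv hu (by omega) c
          have hdw0 : cdist (φ v + (u - v)) (φ v) = cdist u v := cdist_of_add_sub _ _ _
          have hw0C : φ v + (u - v) ∈ C k := by
            refine hC k hkK' (φ v) _ (him v hv) ?_
            rw [hdw0]; omega
          refine ⟨some (φ v + (u - v), c), Function.update φ u (φ v + (u - v)),
            insert (φ v + (u - v)) J, ⟨hCE k _ hw0C, hfree, hc⟩, hsim₁, ?_, ?_, ?_⟩
          · intro w hw
            by_cases hwu : w = u
            · rcases hwu.symm with rfl
              refine ⟨φ v, him v hv, ?_⟩
              rw [Function.update_self, hdw0]; exact hvd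
            · have hzw : z w ≠ none := by
                rw [show applyMove z (some (u, c)) = Function.update z u (some c) from rfl,
                  Function.update_of_ne hwu] at hw
                exact hw
              refine ⟨φ w, him w hzw, ?_⟩
              rw [Function.update_of_ne hwu, cdist_self]; omega
          · intro w
            rw [show applyMove z' (some (φ v + (u - v), c)) =
              Function.update z' (φ v + (u - v)) (some c) from rfl,
              supp_update, Finset.mem_insert, hJ]
          · exact Finset.card_insert_le _ _
        · -- fresh move
          push_neg at hn
          obtain ⟨i', hi'C, hi'far⟩ := hRoom (k+1) hk J (by omega)
          have hfz2 : ∀ w, z' w ≠ none → rho R (k+1) < cdist i' w := by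
            intro w hw
            have := hi'far w ((hJ w).mp hw)
            omega
          obtain ⟨hfree, hsim₁⟩ := extendFresh (σ := rho R (k+1)) (σ' := 4 * rho R k)
            (by omega) hsim hu hn hfz2 c
          refine ⟨some (i', c), Function.update φ u i', insert i' J,
            ⟨hCE (k+1) _ hi'C, hfree, hc⟩, hsim₁, ?_, ?_, ?_⟩
          · intro w hw
            by_cases hwu : w = u
            · rcases hwu.symm with rfl
              exact ⟨i', hi'C, by rw [Function.update_self, cdist_self]; omega⟩
            · have hzw : z w ≠ none := by
                rw [show applyMove z (some (u, c)) = Function.update z u (some c) from rfl,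
                  Function.update_of_ne hwu] at hw
                exact hw
              refine ⟨φ w, him w hzw, ?_⟩
              rw [Function.update_of_ne hwu, cdist_self]; omega
          · intro w
            rw [show applyMove z' (some (i', c)) = Function.update z' i' (some c) from rfl,
              supp_update, Finset.mem_insert, hJ]
          · exact Finset.card_insert_le _ _
    -- B-stage
    have him_k : ∀ w, (applyMove z a) w ≠ none → φ₁ w ∈ C k := by
      intro w hw
      obtain ⟨u0, hu0C, hu0d⟩ := hanch w hw
      exact hC k hkK' u0 (φ₁ w) hu0C (by omega)
    refine Or.inr ⟨a', hlegala', fun b' hb'leg => ?_⟩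
    cases b' with
    | none =>
      exact IH hkK (applyMove z a) (applyMove z' a') φ₁ J₁ (hsim₁.mono (by omega))
        him_k hJ₁ (by omega) (hb none trivial)
    | some wb =>
      obtain ⟨w', c'⟩ := wb
      obtain ⟨-, hw'un, hc'⟩ := hb'leg
      by_cases hbn : ∃ v, (applyMove z a) v ≠ none ∧ cdist w' (φ₁ v) ≤ rho R k
      · -- B's move lands near the image: pull it back
        obtain ⟨v, hv, hvd⟩ := hbn
        have hsub : v + (w' - φ₁ v) - v = w' - φ₁ v := by abel
        have hu₂d : cdist (v + (w' - φ₁ v)) v = cdist w' (φ₁ v) :=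
          cdist_of_add_sub _ _ _
        have hu₂ : (applyMove z a) (v + (w' - φ₁ v)) = none := by
          by_contra hcol
          have hrr := hsim₁.rig _ v hcol hv (by omega)
          have h2 := sub_eq_shift hrr
          rw [hsub] at h2
          have h3 : φ₁ (v + (w' - φ₁ v)) = w' := by rw [h2]; abel
          have := hsim₁.image_coloured hcol
          rw [h3] at this
          exact this hw'un
        obtain ⟨-, hsim₂⟩ := extendNear (le_refl (4 * rho R k)) hsim₁ hv hu₂
          (by omega) c'
        have hcell : φ₁ v + (v + (w' - φ₁ v) - v) = w' := by rw [hsub]; abel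
        rw [hcell] at hsim₂
        have hbleg : legalMove m Set.univ (applyMove z a) (some (v + (w' - φ₁ v), c')) :=
          ⟨Set.mem_univ _, hu₂, hc'⟩
        have hz₂ := hb _ hbleg
        obtain ⟨u0, hu0C, hu0d⟩ := hanch v hv
        refine IH hkK _ _ _ (insert w' J₁) hsim₂ ?_ ?_ (by
          have := Finset.card_insert_le w' J₁; omega) hz₂
        · intro w hw
          by_cases hwu : w = v + (w' - φ₁ v)
          · rcases hwu.symm with rfl
            rw [Function.update_self]
            refine hC k hkK' u0 w' hu0C ?_
            have := cdist_triangle w' (φ₁ v) u0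
            omega
          · have hzw : (applyMove z a) w ≠ none := by
              rw [Function.update_of_ne hwu] at hw
              exact hw
            rw [Function.update_of_ne hwu]
            exact him_k w hzw
        · intro w
          rw [show applyMove (applyMove z' a') (some (w', c')) =
            Function.update (applyMove z' a') w' (some c') from rfl,
            supp_update, Finset.mem_insert, hJ₁]
      · -- B's move is junk
        push_neg at hbn
        have hsim₂ := extendJunk (by omega) hsim₁ hw'un hbn c'
        exact IH hkK (applyMove z a) _ φ₁ (insert w' J₁) hsim₂ him_k
          (fun w => by
            rw [show applyMove (applyMove z' a') (some (w', c')) =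
              Function.update (applyMove z' a') w' (some c') from rfl,
              supp_update, Finset.mem_insert, hJ₁])
          (by have := Finset.card_insert_le w' J₁; omega)
          (hb none trivial)

end DominoAux
namespace DominoAux

variable {d : ℕ}

/-- uniform bound over a finite set, for monotone properties -/
lemma finsetBound {α : Type*} (s : Finset α) (P : α → ℕ → Prop)
    (hm : ∀ a k k', k ≤ k' → P a k → P a k')
    (he : ∀ a ∈ s, ∃ k, P a k) : ∃ K, ∀ a ∈ s, P a K := by
  classical
  induction s using Finset.induction with
  | empty => exact ⟨0, by simp⟩
  | insert a s hnotmem ih =>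
    obtain ⟨ka, hka⟩ := he a (Finset.mem_insert_self _ _)
    obtain ⟨K, hK⟩ := ih fun b hb => he b (Finset.mem_insert_of_mem hb)
    refine ⟨max ka K, fun b hb => ?_⟩
    rcases Finset.mem_insert.mp hb with rfl | hb
    · exact hm b ka _ (le_max_left _ _) hka
    · exact hm b K _ (le_max_right _ _) (hK b hb)


/-- a cell with a single large coordinate -/
def spike (hd : 0 < d) (Mv : ℤ) : Cell d := fun idx => if idx = ⟨0, hd⟩ then Mv else 0

lemma spike_coord (hd : 0 < d) (Mv : ℤ) : spike hd Mv ⟨0, hd⟩ = Mv := if_pos rfl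

lemma roomUniv (hd : 0 < d) (r : ℕ) (S : Finset (Cell d)) :
    ∃ i : Cell d, ∀ p ∈ S, r < cdist i p := by
  classical
  obtain ⟨Ms, hMs⟩ : ∃ Ms : ℕ, ∀ p ∈ S, (p ⟨0, hd⟩).natAbs ≤ Ms :=
    ⟨S.sup fun p => (p ⟨0, hd⟩).natAbs,
      fun p hp => Finset.le_sup (f := fun p => (p ⟨0, hd⟩).natAbs) hp⟩
  refine ⟨spike hd ((Ms + r + 1 : ℕ) : ℤ), fun p hp => ?_⟩
  have h2 := coord_le_cnorm (spike hd ((Ms + r + 1 : ℕ) : ℤ) - p) ⟨0, hd⟩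
  have h4 : (spike hd ((Ms + r + 1 : ℕ) : ℤ) - p) ⟨0, hd⟩
      = ((Ms + r + 1 : ℕ) : ℤ) - p ⟨0, hd⟩ := by
    rw [Pi.sub_apply, spike_coord]
  rw [h4] at h2
  have h1 := hMs p hp
  show r < cnorm (spike hd ((Ms + r + 1 : ℕ) : ℤ) - p)
  omega

/-- a far isolated junk tile does not decrease A's forcing power -/
lemma junkMono {m : ℕ} {F : List (PatternCode d)} (hd : 0 < d) {k : ℕ} {y : Board d}
    (J : Finset (Cell d)) (hJ : ∀ w, y w ≠ none ↔ w ∈ J) {i : Cell d} (c : ℕ)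
    (hfar : ∀ u, y u ≠ none → rho (patRad F) k < cdist i u)
    (hw : Wk m F Set.univ k y) :
    Wk m F Set.univ k (Function.update y i (some c)) := by
  have hiJ : ∀ u, y u ≠ none → i ≠ u := by
    intro u hu hiu
    have := hfar u hu
    rw [hiu, cdist_self] at this
    omega
  refine master (m := m) (F := F) k (fun _ => Set.univ) Set.univ ((insert i J).card + 2 * k)
    (fun _ x _ => Set.mem_univ x) (fun _ _ _ w _ _ => Set.mem_univ w)
    (fun j _ S _ => by
      obtain ⟨i0, hi0⟩ := roomUniv hd (8 * rho (patRad F) j) S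
      exact ⟨i0, Set.mem_univ _, hi0⟩)
    k (le_refl k) y (Function.update y i (some c)) id (insert i J) ?_
    (fun u _ => Set.mem_univ _)
    (fun w => by rw [supp_update, Finset.mem_insert, hJ]) (le_refl _) hw
  constructor
  · intro u hu
    show Function.update y i (some c) u = y u
    exact Function.update_of_ne (fun h => hiJ u hu h.symm) _ _
  · intro u v _ _ _; rfl
  · intro u v _ _ _; rfl
  · intro w hw'
    by_cases hwi : w = i
    · rcases hwi.symm with rfl
      exact Or.inr fun u hu => hfar u hu
    · rw [supp_update] at hw'
      rcases hw' with rfl | hw'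
      · exact absurd rfl hwi
      · exact Or.inl ⟨w, hw', rfl⟩

/-- the ball of radius `r` around `u`, as a finset -/
noncomputable def ballF (u : Cell d) (r : ℕ) : Finset (Cell d) :=
  Fintype.piFinset fun k => Finset.Icc (u k - r) (u k + r)

lemma mem_ballF {i u : Cell d} {r : ℕ} : i ∈ ballF u r ↔ cdist i u ≤ r := by
  rw [ballF, Fintype.mem_piFinset]
  rw [show cdist i u = cnorm (i - u) from rfl, cnorm_le_iff]
  constructor
  · intro h k
    have := h k
    rw [Finset.mem_Icc] at this
    simp only [Pi.sub_apply]
    omega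
  · intro h k
    have := h k
    rw [Finset.mem_Icc]
    simp only [Pi.sub_apply] at this
    omega

/-- if every B-reply leads to a position with finite rank, then the original
position itself had finite rank -/
lemma crux {m : ℕ} {F : List (PatternCode d)} (hd : 0 < d) {x : Board d}
    (J : Finset (Cell d)) (hJ : ∀ w, x w ≠ none ↔ w ∈ J) {a : MoveD d}
    (ha : legalMove m Set.univ x a)
    (hbad : ∀ b, legalMove m Set.univ (applyMove x a) b →
      ∃ k, Wk m F Set.univ k (applyMove (applyMove x a) b)) :
    ∃ K, Wk m F Set.univ (K + 1) x := by
  obtain ⟨Jy, hJy⟩ : ∃ Jy : Finset (Cell d), ∀ w, (applyMove x a) w ≠ none ↔ w ∈ Jy := by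
    cases a with
    | none => exact ⟨J, hJ⟩
    | some p =>
      exact ⟨insert p.1 J, fun w => by
        rw [show applyMove x (some p) = Function.update x p.1 (some p.2) from rfl,
          supp_update, Finset.mem_insert, hJ]⟩
  obtain ⟨kp, hkp⟩ := hbad none trivial
  set N : Finset (Cell d × ℕ) :=
    (Jy.biUnion fun u => ballF u (rho (patRad F) kp)) ×ˢ Finset.range m with hN
  obtain ⟨K1, hK1⟩ := finsetBound N
    (fun bc k => legalMove m Set.univ (applyMove x a) (some bc) →
      Wk m F Set.univ k (applyMove (applyMove x a) (some bc)))
    (fun bc k k' hkk hk hleg => wk_mono hkk (hk hleg))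
    (fun bc _ => by
      by_cases hleg : legalMove m Set.univ (applyMove x a) (some bc)
      · obtain ⟨kb, hkb⟩ := hbad (some bc) hleg
        exact ⟨kb, fun _ => hkb⟩
      · exact ⟨0, fun hleg' => absurd hleg' hleg⟩)
  refine ⟨max kp K1, Or.inr ⟨a, ha, fun b hbleg => ?_⟩⟩
  cases b with
  | none => exact wk_mono (le_max_left _ _) hkp
  | some bc =>
    obtain ⟨i, c⟩ := bc
    obtain ⟨-, hiun, hcm⟩ := hbleg
    by_cases hfar : ∀ u, (applyMove x a) u ≠ none → rho (patRad F) kp < cdist i u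
    · exact wk_mono (le_max_left _ _) (junkMono hd Jy hJy c hfar hkp)
    · push_neg at hfar
      obtain ⟨u, hu, hdist⟩ := hfar
      have hiN : (i, c) ∈ N := by
        rw [hN, Finset.mem_product]
        exact ⟨Finset.mem_biUnion.mpr ⟨u, (hJy u).mp hu, mem_ballF.mpr hdist⟩,
          Finset.mem_range.mpr hcm⟩
      exact wk_mono (le_max_right _ _) (hK1 (i, c) hiN ⟨Set.mem_univ _, hiun, hcm⟩)

/-- **Compactness.** If A wins the game on `ℤ^d` then the empty board has
finite rank. -/
theorem exists_k0 {m : ℕ} {F : List (PatternCode d)} (hd : 0 < d)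
    (h : AWins m F Set.univ alt) :
    ∃ k, Wk m F Set.univ k (emptyBoard d) := by
  by_contra hne
  push_neg at hne
  obtain ⟨stA, hA⟩ := h
  classical
  set stB : Strategy d := fun y =>
    if hg : ∃ b, legalMove m Set.univ y b ∧
        ∀ k, ¬ Wk m F Set.univ k (applyMove y b) then Classical.choose hg else none
    with hstB
  have key : ∀ j, ∀ k, ¬ Wk m F Set.univ k (play m Set.univ alt stA stB (2*j)) := by
    intro j
    induction j with
    | zero => intro k; exact hne k
    | succ j ih =>
      obtain ⟨a, ha, hstep⟩ := step_exists m Set.univ stA (play m Set.univ alt stA stB (2*j))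
      have hodd : play m Set.univ alt stA stB (2*j+1) =
          applyMove (play m Set.univ alt stA stB (2*j)) a := by
        rw [play_even_succ, hstep]
      obtain ⟨J, hJ⟩ := play_supp m Set.univ alt stA stB (2*j)
      have hgood : ∃ b, legalMove m Set.univ (play m Set.univ alt stA stB (2*j+1)) b ∧
          ∀ k, ¬ Wk m F Set.univ k (applyMove (play m Set.univ alt stA stB (2*j+1)) b) := by
        by_contra hbadG
        push_neg at hbadG
        rw [hodd] at hbadG
        obtain ⟨K, hK⟩ := crux hd J hJ ha hbadG
        exact ih (K+1) hK
      have hBmove : stB (play m Set.univ alt stA stB (2*j+1)) = Classical.choose hgood :=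
        dif_pos hgood
      have heven : play m Set.univ alt stA stB (2*j+2) =
          applyMove (play m Set.univ alt stA stB (2*j+1)) (Classical.choose hgood) := by
        have hl : legalMove m Set.univ (play m Set.univ alt stA stB (2*j+1))
            (stB (play m Set.univ alt stA stB (2*j+1))) := by
          rw [hBmove]; exact (Classical.choose_spec hgood).1
        rw [play_odd_succ, step_of hl, hBmove]
      intro k
      have hmul : 2 * (j + 1) = 2 * j + 2 := by ring
      rw [hmul, heven]
      exact (Classical.choose_spec hgood).2 k
  have hnof : ∀ t, ¬ isFinal F (play m Set.univ alt stA stB t) := by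
    intro t
    rcases Nat.even_or_odd t with ⟨j, hj⟩ | ⟨j, hj⟩
    · have ht : t = 2 * j := by omega
      rw [ht]
      intro hf
      exact key j 0 hf
    · have ht : t = 2 * j + 1 := by omega
      rw [ht]
      intro hf
      obtain ⟨a, ha, hstep⟩ := step_exists m Set.univ stA (play m Set.univ alt stA stB (2*j))
      have hodd : play m Set.univ alt stA stB (2*j+1) =
          applyMove (play m Set.univ alt stA stB (2*j)) a := by
        rw [play_even_succ, hstep]
      rw [hodd] at hf
      refine key j 1 (Or.inr ⟨a, ha, fun b hb => ?_⟩)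
      exact isFinal_mono (applyMove_extends hb) hf
  obtain ⟨t, hfin⟩ := hA stB
  exact hnof t hfin

end DominoAux
namespace DominoAux

variable {d : ℕ}

lemma mem_box {n : ℕ} {i : Cell d} : i ∈ box d n ↔ ∀ k, (i k).natAbs ≤ n := by
  rw [box, Set.mem_setOf_eq]
  constructor
  · intro h k
    have := h k
    rw [abs_le] at this
    omega
  · intro h k
    rw [abs_le]
    have := h k
    omega

lemma box_mono {n n' : ℕ} (h : n ≤ n') {i : Cell d} (hi : i ∈ box d n) : i ∈ box d n' := by
  rw [mem_box] at hi ⊢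
  intro k
  exact le_trans (hi k) h

/-- room inside a big box: a cell far from at most `SZ` given cells -/
lemma roomBox (hd : 0 < d) (ρk ρj SZ : ℕ) (hρ : ρj ≤ ρk) {n : ℕ}
    (hn : (SZ + 1) * (17 * ρk + 1) ≤ n) (S : Finset (Cell d)) (hS : S.card ≤ SZ) :
    ∃ i, i ∈ box d n ∧ ∀ p ∈ S, 8 * ρj < cdist i p := by
  classical
  rcases S.eq_empty_or_nonempty with rfl | ⟨p₀, hp₀⟩
  · exact ⟨spike hd 0, by
      rw [mem_box]; intro k; by_cases hk : k = ⟨0, hd⟩ <;>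
        simp [spike, hk], by simp⟩
  set Q : ℕ := 17 * ρk + 1 with hQ
  by_contra hcon
  push_neg at hcon
  have hex : ∀ r : ℕ, ∃ p, r ∈ Finset.range (SZ + 1) →
      p ∈ S ∧ cdist (spike hd ((Q * r : ℕ) : ℤ)) p ≤ 8 * ρj := by
    intro r
    by_cases hr : r ∈ Finset.range (SZ + 1)
    · have hmem : spike hd ((Q * r : ℕ) : ℤ) ∈ box d n := by
        rw [mem_box]
        intro k
        by_cases hk : k = ⟨0, hd⟩
        · rcases hk.symm with rfl
          rw [spike_coord]
          have hr' : r ≤ SZ := by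
            have := Finset.mem_range.mp hr; omega
          have : Q * r ≤ (SZ + 1) * Q := by
            have := Nat.mul_le_mul_left Q hr'
            calc Q * r ≤ Q * SZ := Nat.mul_le_mul_left Q hr'
              _ ≤ (SZ + 1) * Q := by ring_nf; omega
          simp only [Int.natAbs_natCast]
          omega
        · simp [spike, hk]
      obtain ⟨p, hpS, hpd⟩ := hcon _ hmem
      exact ⟨p, fun _ => ⟨hpS, hpd⟩⟩
    · exact ⟨p₀, fun h => absurd h hr⟩
  choose f hf using hex
  have hmaps : ∀ r ∈ Finset.range (SZ + 1), f r ∈ S := fun r hr => (hf r hr).1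
  have hcardlt : S.card < (Finset.range (SZ + 1)).card := by
    rw [Finset.card_range]; omega
  obtain ⟨r, hr, r', hr', hne, hfeq⟩ :=
    Finset.exists_ne_map_eq_of_card_lt_of_maps_to hcardlt hmaps
  have h1 := (hf r hr).2
  have h2 := (hf r' hr').2
  rw [hfeq] at h1
  have htri := cdist_triangle (spike hd ((Q * r : ℕ) : ℤ)) (f r')
    (spike hd ((Q * r' : ℕ) : ℤ))
  rw [cdist_comm (f r') (spike hd ((Q * r' : ℕ) : ℤ))] at htri
  have hcoord := coord_le_cnorm
    (spike hd ((Q * r : ℕ) : ℤ) - spike hd ((Q * r' : ℕ) : ℤ)) ⟨0, hd⟩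
  have hco : (spike hd ((Q * r : ℕ) : ℤ) - spike hd ((Q * r' : ℕ) : ℤ)) ⟨0, hd⟩
      = ((Q * r : ℕ) : ℤ) - ((Q * r' : ℕ) : ℤ) := by
    rw [Pi.sub_apply, spike_coord, spike_coord]
  rw [hco] at hcoord
  have hQle : Q ≤ (((Q * r : ℕ) : ℤ) - ((Q * r' : ℕ) : ℤ)).natAbs := by
    rcases Nat.lt_or_ge r r' with hlt | hge
    · have : Q * (r + 1) ≤ Q * r' := Nat.mul_le_mul_left Q hlt
      have h5 : Q * r + Q ≤ Q * r' := by
        calc Q * r + Q = Q * (r + 1) := by ring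
          _ ≤ Q * r' := this
      omega
    · have hlt : r' < r := by omega
      have : Q * (r' + 1) ≤ Q * r := Nat.mul_le_mul_left Q hlt
      have h5 : Q * r' + Q ≤ Q * r := by
        calc Q * r' + Q = Q * (r' + 1) := by ring
          _ ≤ Q * r := this
      omega
  have : cdist (spike hd ((Q * r : ℕ) : ℤ)) (spike hd ((Q * r' : ℕ) : ℤ))
      = cnorm (spike hd ((Q * r : ℕ) : ℤ) - spike hd ((Q * r' : ℕ) : ℤ)) := rfl
  omega

/-- **Localization.** If A can force a win within `k₀` rounds on the unrestricted
game from the empty board, A can do so playing only inside a sufficiently large box. -/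
theorem toBox {m : ℕ} {F : List (PatternCode d)} (hd : 0 < d) {k₀ : ℕ}
    (hw : Wk m F Set.univ k₀ (emptyBoard d)) :
    ∃ n : ℕ, Wk m F (box d n) k₀ (emptyBoard d) := by
  set SZ : ℕ := 2 * k₀ with hSZ
  set A₀ : ℕ := (SZ + 1) * (17 * rho (patRad F) k₀ + 1) with hA₀
  set NB : ℕ → ℕ := fun j => A₀ + 8 * rho (patRad F) k₀ * (k₀ - j) with hNB
  have hNBmono : ∀ j, NB j ≤ NB 0 := by
    intro j
    rw [hNB]
    simp only
    have : k₀ - j ≤ k₀ - 0 := by omega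
    have := Nat.mul_le_mul_left (8 * rho (patRad F) k₀) this
    omega
  refine ⟨NB 0, ?_⟩
  refine master (m := m) (F := F) k₀ (fun j => box d (NB j)) (box d (NB 0)) SZ
    (fun j x hx => box_mono (hNBmono j) hx) ?_ ?_ k₀ (le_refl _)
    (emptyBoard d) (emptyBoard d) id ∅ ?_ ?_ ?_ ?_ hw
  · -- hC
    intro j hj u w hu hdist
    rw [mem_box] at hu ⊢
    intro k
    have h1 := hu k
    have h2 : (w k - u k).natAbs ≤ cdist w u := coord_le_cnorm (w - u) k
    have h3 : NB j = NB (j + 1) + 8 * rho (patRad F) k₀ := by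
      rw [hNB]
      simp only
      rw [show k₀ - j = (k₀ - (j + 1)) + 1 from by omega]
      ring
    have h4 : rho (patRad F) j ≤ rho (patRad F) k₀ := rho_mono (patRad F) (by omega)
    omega
  · -- hRoom
    intro j hj S hS
    exact roomBox hd (rho (patRad F) k₀) (rho (patRad F) j) SZ (rho_mono (patRad F) hj)
      (n := NB j) (by rw [hNB]; exact Nat.le_add_right _ _) S hS
  · -- Sim
    constructor
    · intro u hu; exact absurd rfl hu
    · intro u v hu _ _; exact absurd rfl hu
    · intro u v hu _ _; exact absurd rfl hu
    · intro w hw; exact absurd rfl hw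
  · intro u hu; exact absurd rfl hu
  · intro w
    constructor
    · intro h; exact absurd rfl h
    · intro h; cases h
  · simp [hSZ]

end DominoAux
attribute [local instance] Classical.propDecidable
namespace DominoAux

variable {d : ℕ}

lemma rankstep {m : ℕ} {F : List (PatternCode d)} {EA : Set (Cell d)} {x : Board d}
    (h : ∃ i, Wk m F EA i x) (hf : ¬ isFinal F x) :
    ∃ a, legalMove m EA x a ∧ ∀ b, legalMove m Set.univ (applyMove x a) b →
      Wk m F EA (Nat.find h - 1) (applyMove (applyMove x a) b) := by
  have hs := Nat.find_spec h
  rcases hk : Nat.find h with _ | r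
  · rw [hk] at hs; exact absurd hs hf
  · rw [hk] at hs
    rcases hs with hfin | ⟨a, ha, hb⟩
    · exact absurd hfin hf
    · refine ⟨a, ha, fun b hbl => ?_⟩
      simpa using hb b hbl

/-- the extracted strategy for A -/
noncomputable def stAx (m : ℕ) (F : List (PatternCode d)) (EA : Set (Cell d)) :
    Strategy d := fun x =>
  if h : ∃ i, Wk m F EA i x then
    (if hf : isFinal F x then none else Classical.choose (rankstep h hf))
  else none

lemma stAx_eq {m : ℕ} {F : List (PatternCode d)} {EA : Set (Cell d)} {x : Board d}
    (hex : ∃ i, Wk m F EA i x) (hnf : ¬ isFinal F x) :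
    stAx m F EA x = Classical.choose (rankstep hex hnf) := by
  unfold stAx
  rw [dif_pos hex, dif_neg hnf]

lemma stAx_mem {m : ℕ} {F : List (PatternCode d)} {EA : Set (Cell d)} :
    ∀ (x : Board d) (i : Cell d) (a : ℕ), stAx m F EA x = some (i, a) → i ∈ EA := by
  intro x i a hx
  by_cases h : ∃ i', Wk m F EA i' x
  · by_cases hf : isFinal F x
    · rw [show stAx m F EA x = none from by unfold stAx; rw [dif_pos h, dif_pos hf]] at hx
      exact nomatch hx
    · rw [stAx_eq h hf] at hx
      have hspec := (Classical.choose_spec (rankstep h hf)).1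
      rw [hx] at hspec
      exact hspec.1
  · rw [show stAx m F EA x = none from by unfold stAx; rw [dif_neg h]] at hx
    exact nomatch hx

theorem stAx_wins {m : ℕ} {F : List (PatternCode d)} {EA : Set (Cell d)} {k₀ : ℕ}
    (hwin : Wk m F EA k₀ (emptyBoard d)) (stB : Strategy d) :
    ∃ t ≤ 2 * k₀, isFinal F (play m Set.univ alt (stAx m F EA) stB t) := by
  by_contra hno
  push_neg at hno
  have inv : ∀ j, j ≤ k₀ →
      ∃ i, i ≤ k₀ - j ∧ Wk m F EA i (play m Set.univ alt (stAx m F EA) stB (2*j)) := by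
    intro j
    induction j with
    | zero => intro _; exact ⟨k₀, by omega, hwin⟩
    | succ j ih =>
      intro hj1
      obtain ⟨i, hi, hWk⟩ := ih (by omega)
      have hnf : ¬ isFinal F (play m Set.univ alt (stAx m F EA) stB (2*j)) :=
        hno (2*j) (by omega)
      have hex : ∃ i', Wk m F EA i' (play m Set.univ alt (stAx m F EA) stB (2*j)) :=
        ⟨i, hWk⟩
      have hfind : Nat.find hex ≤ i := Nat.find_min' hex hWk
      have hfind1 : 1 ≤ Nat.find hex := by
        by_contra h0
        have h00 : Nat.find hex = 0 := by omega
        have := Nat.find_spec hex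
        rw [h00] at this
        exact hnf this
      have hax : stAx m F EA (play m Set.univ alt (stAx m F EA) stB (2*j)) =
          Classical.choose (rankstep hex hnf) := stAx_eq hex hnf
      have hspec := Classical.choose_spec (rankstep hex hnf)
      have hlegA : legalMove m Set.univ (play m Set.univ alt (stAx m F EA) stB (2*j))
          (stAx m F EA (play m Set.univ alt (stAx m F EA) stB (2*j))) := by
        rw [hax]; exact legal_univ hspec.1
      have h1 : play m Set.univ alt (stAx m F EA) stB (2*j+1)
          = applyMove (play m Set.univ alt (stAx m F EA) stB (2*j))
              (Classical.choose (rankstep hex hnf)) := by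
        rw [play_even_succ, step_of hlegA, hax]
      obtain ⟨b, hbleg, hstepB⟩ :=
        step_exists m Set.univ stB (play m Set.univ alt (stAx m F EA) stB (2*j+1))
      have h2 : play m Set.univ alt (stAx m F EA) stB (2*j+2)
          = applyMove (applyMove (play m Set.univ alt (stAx m F EA) stB (2*j))
              (Classical.choose (rankstep hex hnf))) b := by
        rw [play_odd_succ, hstepB, h1]
      refine ⟨Nat.find hex - 1, by omega, ?_⟩
      rw [show 2*(j+1) = 2*j+2 from by ring, h2]
      apply hspec.2 b
      rw [← h1]
      exact hbleg
  obtain ⟨i, hi, hWk⟩ := inv k₀ (le_refl _)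
  have hi0 : i = 0 := by omega
  rw [hi0] at hWk
  exact hno (2*k₀) (le_refl _) hWk

lemma step_colours {m : ℕ} {E : Set (Cell d)} (st : Strategy d) {x : Board d}
    (hx : ∀ i a, x i = some a → a < m) :
    ∀ i a, step m E st x i = some a → a < m := by
  obtain ⟨b, hbleg, hstep⟩ := step_exists m E st x
  rw [hstep]
  intro i a h
  cases b with
  | none => exact hx i a h
  | some p =>
    obtain ⟨i0, c⟩ := p
    by_cases hii : i = i0
    · rcases hii with rfl
      rw [show applyMove x (some (i, c)) = Function.update x i (some c) from rfl,
        Function.update_self] at h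
      cases h
      exact hbleg.2.2
    · rw [show applyMove x (some (i0, c)) = Function.update x i0 (some c) from rfl,
        Function.update_of_ne hii] at h
      exact hx i a h

/-- colours appearing in a play are `< m` -/
lemma play_colours (m : ℕ) (E : Set (Cell d)) (s : ℕ → Player) (stA stB : Strategy d) :
    ∀ t i a, play m E s stA stB t i = some a → a < m := by
  intro t
  induction t with
  | zero => intro i a h; exact absurd h (by simp [play, emptyBoard])
  | succ t ih =>
    intro i a h
    rw [play] at h
    exact step_colours _ ih i a h

end DominoAux

/-- If `A` wins the Domino game on `ℤ^d`, then the game value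
is finite: `A` has a strategy winning within `T` moves for some `T ∈ ℕ`; moreover
`A` has a winning strategy that only plays cells inside some box `⟦-n, n⟧^d`. -/
theorem aWins_finite_value (d m : ℕ) (F : List (PatternCode d))
    (h : AWins m F Set.univ alt) :
    (∃ T : ℕ, ∃ stA : Strategy d, ∀ stB : Strategy d,
        ∃ t ≤ T, isFinal F (play m Set.univ alt stA stB t)) ∧
    (∃ n : ℕ, ∃ stA : Strategy d,
        (∀ (x : Board d) (i : Cell d) (a : ℕ), stA x = some (i, a) → i ∈ box d n) ∧
        ∀ stB : Strategy d, ∃ t : ℕ, isFinal F (play m Set.univ alt stA stB t)) := by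
  classical
  rcases Nat.eq_zero_or_pos d with hd0 | hd
  · -- the degenerate case d = 0 : a single cell
    subst hd0
    by_cases hfe : isFinal F (emptyBoard 0)
    · refine ⟨⟨0, fun _ => none, fun stB => ⟨0, le_refl _, hfe⟩⟩,
        ⟨0, fun _ => none, fun x i a hx => by simp at hx, fun stB => ⟨0, hfe⟩⟩⟩
    · obtain ⟨stA0, hA0⟩ := h
      obtain ⟨t, hft⟩ := hA0 (fun _ => none)
      have hsub : ∀ u v : Cell 0, u = v := fun u v => funext fun k => k.elim0
      rcases hc : play m Set.univ alt stA0 (fun _ => none) t (fun _ => 0) with _ | a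
      · exfalso
        apply hfe
        have hEmp : play m Set.univ alt stA0 (fun _ => none) t = emptyBoard 0 := by
          funext i
          rw [hsub i (fun _ => 0), hc]
          rfl
        rw [← hEmp]
        exact hft
      · have ham : a < m :=
          DominoAux.play_colours m Set.univ alt stA0 (fun _ => none) t (fun _ => 0) a hc
        have hwin1 : ∀ stB : Strategy 0,
            isFinal F (play m Set.univ alt (fun _ => some ((fun _ => 0 : Cell 0), a)) stB 1) := by
          intro stB
          have hleg : legalMove m Set.univ
              (play m Set.univ alt (fun _ => some ((fun _ => 0 : Cell 0), a)) stB 0)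
              (some ((fun _ => 0 : Cell 0), a)) :=
            ⟨Set.mem_univ _, rfl, ham⟩
          have h1 := DominoAux.play_even_succ m Set.univ
            (fun _ => some ((fun _ => 0 : Cell 0), a)) stB 0
          rw [show 2 * 0 + 1 = 1 from rfl, show 2 * 0 = 0 from rfl] at h1
          rw [h1, DominoAux.step_of hleg]
          have hboard : applyMove
              (play m Set.univ alt (fun _ => some ((fun _ => 0 : Cell 0), a)) stB 0)
              (some ((fun _ => 0 : Cell 0), a))
              = play m Set.univ alt stA0 (fun _ => none) t := by
            funext i
            rw [hsub i (fun _ => 0), hc]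
            rw [show applyMove (play m Set.univ alt (fun _ => some ((fun _ => 0 : Cell 0), a)) stB 0)
              (some ((fun _ => 0 : Cell 0), a)) = Function.update
              (play m Set.univ alt (fun _ => some ((fun _ => 0 : Cell 0), a)) stB 0)
              (fun _ => 0) (some a) from rfl, Function.update_self]
          rw [hboard]
          exact hft
        exact ⟨⟨1, fun _ => some ((fun _ => 0 : Cell 0), a), fun stB => ⟨1, le_refl _, hwin1 stB⟩⟩,
          ⟨0, fun _ => some ((fun _ => 0 : Cell 0), a),
            fun x i b hx => fun k => k.elim0, fun stB => ⟨1, hwin1 stB⟩⟩⟩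
  · -- the main case d ≥ 1
    obtain ⟨k₀, hk₀⟩ := DominoAux.exists_k0 hd h
    obtain ⟨n, hbox⟩ := DominoAux.toBox hd hk₀
    refine ⟨⟨2 * k₀, DominoAux.stAx m F (box d n), fun stB => ?_⟩,
      ⟨n, DominoAux.stAx m F (box d n), DominoAux.stAx_mem, fun stB => ?_⟩⟩
    · exact DominoAux.stAx_wins hbox stB
    · obtain ⟨t, _, hf⟩ := DominoAux.stAx_wins hbox stB
      exact ⟨t, hf⟩
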